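/- arXiv:1401.5516 — 2 statements merged into one kernel-verified Lean document; each statement's English description precedes it below -/
import Mathlib

section
/- On the round 3-sphere S^3 ⊂ R^4, the Hopf fields u_1 = (−y, x, w, −z)|_{S^3} and u_2 = (−y, x, −w, z)|_{S^3} satisfy u_1 × u_2 = −∇F, where F = (x² + y²)|_{S^3}, × is the vector product and ∇ the gradient on S^3 with respect to the round metric. -/
/-!
STATEMENT 9: On the round `S³ ⊂ ℝ⁴`, the Hopf fields `u₁ = (-y,x,w,-z)` and
`u₂ = (-y,x,-w,z)` satisfy `u₁ × u₂ = -∇F`, with `F = x² + y²`.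
The cross product on the oriented Riemannian 3-manifold `S³` is characterized by
`(a × b, c) = μ(a, b, c)` for all tangent vectors `c`, where the Riemannian volume
form of `S³` is `μ_p(a,b,c) = det(a, b, c, n)` with `n = p` the outward unit normal.
The intrinsic gradient `∇F` at `p ∈ S³` is the tangential projection
`∇F = E - (E·p) p` of the ambient gradient `E = (2x, 2y, 0, 0)`, and `E·p = 2F`.
Coordinates: `p 0 = x`, `p 1 = y`, `p 2 = z`, `p 3 = w`.
-/

noncomputable section

abbrev E4 := Fin 4 → ℝ

def vol4 : AlternatingMap ℝ E4 ℝ (Fin 4) := Matrix.detRowAlternating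

set_option maxHeartbeats 2000000 in
theorem stmt9 (p : E4) (hp : p 0 ^ 2 + p 1 ^ 2 + p 2 ^ 2 + p 3 ^ 2 = 1)
    (u₁ u₂ : E4) (hu₁ : u₁ = ![-p 1, p 0, p 3, -p 2]) (hu₂ : u₂ = ![-p 1, p 0, -p 3, p 2])
    (F : ℝ) (hF : F = p 0 ^ 2 + p 1 ^ 2)
    (gradF : E4) (hgradF : gradF = fun i => (![2 * p 0, 2 * p 1, 0, 0] : E4) i - 2 * F * p i) :
    -- (u₁ × u₂, v) = μ(u₁, u₂, v) = (-∇F, v) for every tangent vector v: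
    ∀ v : E4, (∑ i, v i * p i) = 0 →
      vol4 ![u₁, u₂, v, p] = ∑ i, (-gradF i) * v i := by

  intro v hv
  subst hu₁ hu₂ hF hgradF
  have hv' : v 0 * p 0 + v 1 * p 1 + v 2 * p 2 + v 3 * p 3 = 0 := by
    simpa [Fin.sum_univ_four] using hv
  show (Matrix.of ![![-p 1, p 0, p 3, -p 2], ![-p 1, p 0, -p 3, p 2], v, p]).det = _
  simp [Matrix.det_succ_row_zero, Fin.sum_univ_succ]
  simp [show ((1:Fin 4).succAbove 2) = 3 from rfl, show ((2:Fin 4).succAbove 2) = 3 from rfl,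
    show ((3:Fin 4).succAbove 2) = 2 from rfl,
    show (Fin.succ (2:Fin 3)) = (3:Fin 4) from rfl, show (Fin.castSucc (2:Fin 3)) = (2:Fin 4) from rfl,
    Matrix.cons_val_succ]
  linear_combination (-(2 * (p 0 * v 0 + p 1 * v 1))) * hp
end
end

section
/- Suppose the vorticity of a smooth solution u(t) of the Euler equation on a closed Riemannian 3-manifold is transported by the flow: rot u(t) = (S_0^t)_* rot u(0), where S_0^t : M → M are volume-preserving diffeomorphisms. Then for every t, the measure of the union of ergodic invariant 2-tori of rot u(t) in a fixed isotopy class a equals that for rot u(0): κ_a(rot u(t)) = κ_a(rot u(0)). -/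
/-!
STATEMENT 19: Suppose the vorticity of a smooth Euler solution on a closed Riemannian
3-manifold `M` is transported by the flow: `rot u(t) = (S₀ᵗ)_* rot u(0)` with `S₀ᵗ`
volume-preserving diffeomorphisms (isotopic to the identity, being a flow from the
identity). Then `κ_a(rot u(t)) = κ_a(rot u(0))` for every isotopy class `a` of
embedded 2-tori, where `κ_a(V)` is the inner measure of the union of all ergodic
`V`-invariant 2-tori in the class `a`.
Vector fields are represented by their flows: `φ` is the flow of `rot u(0)`, `Φ`
stands for `S₀ᵗ`, and the flow `ψ` of `rot u(t) = Φ_* rot u(0)` is the conjugated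
flow `ψ_s = Φ ∘ φ_s ∘ Φ⁻¹`. The isotopy class `a` is represented by a reference
torus `Ta`.
-/

open MeasureTheory
open scoped ENNReal

noncomputable section

variable {M : Type*}

/-- `T` is invariant under the flow `φ`. -/
def FlowInvariant (φ : ℝ → M → M) (T : Set M) : Prop := ∀ x ∈ T, ∀ t : ℝ, φ t x ∈ T

/-- `T` is an ergodic invariant 2-torus of the flow `φ`: an invariant subset
homeomorphic to the 2-torus, on which the flow has no rest points and some
trajectory is dense. -/
def IsErgodicTorus [TopologicalSpace M] (φ : ℝ → M → M) (T : Set M) : Prop :=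
  FlowInvariant φ T ∧ Nonempty (↥T ≃ₜ (AddCircle (1 : ℝ) × AddCircle (1 : ℝ))) ∧
    (∀ x ∈ T, ∃ t : ℝ, φ t x ≠ x) ∧
    ∃ x ∈ T, T ⊆ closure (Set.range fun t => φ t x)

/-- `T₁` is (ambient) isotopic to `T₀`: there is a continuous family of
homeomorphisms starting at the identity and carrying `T₀` to `T₁`. -/
def IsotopicTo [TopologicalSpace M] (T₀ T₁ : Set M) : Prop :=
  ∃ Θ : ℝ → M ≃ₜ M, Continuous (fun q : ℝ × M => Θ q.1 q.2) ∧
    Θ 0 = Homeomorph.refl M ∧ (Θ 1) '' T₀ = T₁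

/-- The union of all ergodic invariant tori of `φ` in the isotopy class of `Ta`. -/
def ergTorusUnion [TopologicalSpace M] (φ : ℝ → M → M) (Ta : Set M) : Set M :=
  ⋃₀ {T : Set M | IsErgodicTorus φ T ∧ IsotopicTo Ta T}

/-- Inner measure of a set. -/
def innerMeas [TopologicalSpace M] [MeasurableSpace M] (μm : Measure M) (s : Set M) :
    ℝ≥0∞ :=
  ⨆ (K : Set M) (_ : IsCompact K ∧ K ⊆ s), μm K

/-- `κ_a`: the inner measure of the union of ergodic invariant tori in the isotopy
class `a` (represented by the reference torus `Ta`). -/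
def kappa [TopologicalSpace M] [MeasurableSpace M] (μm : Measure M)
    (φ : ℝ → M → M) (Ta : Set M) : ℝ≥0∞ :=
  innerMeas μm (ergTorusUnion φ Ta)

section Aux

open Classical in
/-- Concatenating an isotopy `Ta ⇝ T` with an isotopy `id ⇝ F` gives `Ta ⇝ F '' T`. -/
lemma aux_isotopic_image [TopologicalSpace M] (F : M ≃ₜ M)
    (hF : ∃ Ξ : ℝ → M ≃ₜ M, Continuous (fun q : ℝ × M => Ξ q.1 q.2) ∧
      Ξ 0 = Homeomorph.refl M ∧ Ξ 1 = F)
    {Ta T : Set M} (h : IsotopicTo Ta T) : IsotopicTo Ta (F '' T) := by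
  obtain ⟨Ξ, hΞc, hΞ0, hΞ1⟩ := hF
  obtain ⟨Θ, hΘc, hΘ0, hΘ1⟩ := h
  refine ⟨fun s => if s ≤ (1:ℝ)/2 then Θ (2*s) else (Θ 1).trans (Ξ (2*s-1)), ?_, ?_, ?_⟩
  · have : (fun q : ℝ × M =>
        (if q.1 ≤ (1:ℝ)/2 then Θ (2*q.1) else (Θ 1).trans (Ξ (2*q.1-1))) q.2)
        = fun q : ℝ × M =>
          if q.1 ≤ (1:ℝ)/2 then Θ (2*q.1) q.2 else Ξ (2*q.1-1) (Θ 1 q.2) := by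
      funext q
      rw [apply_ite (fun h : M ≃ₜ M => h q.2)]
      rfl
    rw [this]
    apply Continuous.if_le
    · exact hΘc.comp ((continuous_const.mul continuous_fst).prodMk continuous_snd)
    · exact hΞc.comp (((continuous_const.mul continuous_fst).sub
        continuous_const).prodMk ((Θ 1).continuous.comp continuous_snd))
    · exact continuous_fst
    · exact continuous_const
    · intro q hq
      have h1 : 2 * q.1 - 1 = 0 := by rw [hq]; ring
      have h2 : 2 * q.1 = 1 := by rw [hq]; ring
      rw [h1, h2, hΞ0]; rfl
  · norm_num [hΘ0]
  · norm_num [hΞ1, ← hΘ1, Set.image_image]; rfl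

/-- Conjugating the flow maps ergodic tori to ergodic tori. -/
lemma aux_erg_image [TopologicalSpace M] (Φ : M ≃ₜ M)
    (φ ψ : ℝ → M → M) (hψ : ∀ t x, ψ t x = Φ (φ t (Φ.symm x)))
    {T : Set M} (h : IsErgodicTorus φ T) : IsErgodicTorus ψ (⇑Φ '' T) := by
  obtain ⟨hinv, ⟨e⟩, hrest, x, hxT, hdense⟩ := h
  refine ⟨?_, ⟨(Φ.image T).symm.trans e⟩, ?_, Φ x, ⟨x, hxT, rfl⟩, ?_⟩
  · rintro _ ⟨y, hy, rfl⟩ t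
    rw [hψ]
    exact ⟨φ t y, hinv y hy t, by rw [Φ.symm_apply_apply]⟩
  · rintro _ ⟨y, hy, rfl⟩
    obtain ⟨t, ht⟩ := hrest y hy
    exact ⟨t, by rw [hψ, Φ.symm_apply_apply]; exact fun hc => ht (Φ.injective hc)⟩
  · have hr0 : (fun t => ψ t (Φ x)) = ⇑Φ ∘ fun t => φ t x := by
      funext t; rw [hψ, Φ.symm_apply_apply]; rfl
    rw [hr0, Set.range_comp]
    calc ⇑Φ '' T ⊆ ⇑Φ '' closure (Set.range fun t => φ t x) := Set.image_mono hdense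
      _ ⊆ closure (⇑Φ '' Set.range fun t => φ t x) :=
          image_closure_subset_closure_image Φ.continuous

lemma aux_union_image [TopologicalSpace M] (Φ : M ≃ₜ M)
    (φ ψ : ℝ → M → M) (hψ : ∀ t x, ψ t x = Φ (φ t (Φ.symm x)))
    (hΦiso : ∃ Θ : ℝ → M ≃ₜ M, Continuous (fun q : ℝ × M => Θ q.1 q.2) ∧
      Θ 0 = Homeomorph.refl M ∧ Θ 1 = Φ)
    (Ta : Set M) :
    ergTorusUnion ψ Ta = ⇑Φ '' ergTorusUnion φ Ta := by
  have hsymm_iso : ∃ Ξ : ℝ → M ≃ₜ M, Continuous (fun q : ℝ × M => Ξ q.1 q.2) ∧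
      Ξ 0 = Homeomorph.refl M ∧ Ξ 1 = Φ.symm := by
    obtain ⟨Θ, hΘc, hΘ0, hΘ1⟩ := hΦiso
    refine ⟨fun s => (Θ (1-s)).trans Φ.symm, ?_, ?_, ?_⟩
    · show Continuous fun q : ℝ × M => Φ.symm (Θ (1 - q.1) q.2)
      exact Φ.symm.continuous.comp (hΘc.comp
        ((continuous_const.sub continuous_fst).prodMk continuous_snd))
    · show (Θ (1-(0:ℝ))).trans Φ.symm = Homeomorph.refl M
      norm_num [hΘ1]
    · show (Θ (1-(1:ℝ))).trans Φ.symm = Φ.symm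
      norm_num [hΘ0]
      exact Homeomorph.ext fun x => rfl
  apply Set.Subset.antisymm
  · rintro x ⟨T, ⟨herg, hiso⟩, hxT⟩
    refine ⟨Φ.symm x, ⟨⇑Φ.symm '' T, ⟨?_, ?_⟩, ⟨x, hxT, rfl⟩⟩, Φ.apply_symm_apply x⟩
    · exact aux_erg_image Φ.symm ψ φ
        (fun t x => by rw [hψ]; simp) herg
    · exact aux_isotopic_image Φ.symm hsymm_iso hiso
  · rintro _ ⟨y, ⟨T, ⟨herg, hiso⟩, hyT⟩, rfl⟩
    exact ⟨⇑Φ '' T, ⟨aux_erg_image Φ φ ψ hψ herg,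
      aux_isotopic_image Φ hΦiso hiso⟩, ⟨y, hyT, rfl⟩⟩

lemma aux_inner [TopologicalSpace M] [T2Space M]
    [MeasurableSpace M] [OpensMeasurableSpace M]
    (μm : Measure M) (Φ : M ≃ₜ M)
    (hΦmp : ∀ A : Set M, MeasurableSet A → μm (⇑Φ '' A) = μm A)
    (s : Set M) : innerMeas μm (⇑Φ '' s) = innerMeas μm s := by
  have key : ∀ K : Set M, IsCompact K → μm (⇑Φ '' K) = μm K := fun K hK =>
    hΦmp K (hK.isClosed.measurableSet)
  apply le_antisymm
  · refine iSup_le fun K => iSup_le fun ⟨hKc, hKs⟩ => ?_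
    have hK' : IsCompact (⇑Φ.symm '' K) := hKc.image Φ.symm.continuous
    have hKeq : ⇑Φ '' (⇑Φ.symm '' K) = K := by
      rw [Set.image_image]; simp
    have : μm K = μm (⇑Φ.symm '' K) := by rw [← key _ hK', hKeq]
    rw [this]
    refine le_trans (le_refl _) (le_iSup_of_le (⇑Φ.symm '' K) ?_)
    refine le_iSup_of_le ⟨hK', ?_⟩ le_rfl
    rw [← Set.image_subset_image_iff Φ.injective, hKeq]
    exact hKs
  · refine iSup_le fun K => iSup_le fun ⟨hKc, hKs⟩ => ?_
    rw [← key _ hKc]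
    exact le_iSup_of_le (⇑Φ '' K) (le_iSup_of_le
      ⟨hKc.image Φ.continuous, Set.image_mono hKs⟩ le_rfl)

end Aux

theorem stmt19 {M : Type*} [TopologicalSpace M] [T2Space M]
    [MeasurableSpace M] [OpensMeasurableSpace M]
    (μm : Measure M) (hμ1 : μm Set.univ = 1)
    -- the flow φ of rot u(0):
    (φ : ℝ → M → M) (hφ0 : ∀ x, φ 0 x = x)
    (hφadd : ∀ s t x, φ (s + t) x = φ s (φ t x))
    -- Φ = S₀ᵗ: a volume-preserving homeomorphism isotopic to the identity:
    (Φ : M ≃ₜ M)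
    (hΦmp : ∀ A : Set M, MeasurableSet A → μm (⇑Φ '' A) = μm A)
    (hΦiso : ∃ Θ : ℝ → M ≃ₜ M, Continuous (fun q : ℝ × M => Θ q.1 q.2) ∧
      Θ 0 = Homeomorph.refl M ∧ Θ 1 = Φ)
    -- ψ: the flow of the transported field rot u(t) = Φ_* rot u(0):
    (ψ : ℝ → M → M) (hψ : ∀ t x, ψ t x = Φ (φ t (Φ.symm x)))
    -- the reference torus of the isotopy class a:
    (Ta : Set M) :
    kappa μm ψ Ta = kappa μm φ Ta := by
  unfold kappa
  rw [aux_union_image Φ φ ψ hψ hΦiso Ta, aux_inner μm Φ hΦmp]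
end
end
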